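/- arXiv:math/9911129 — 3 statements merged into one kernel-verified Lean document; each statement's English description precedes it below -/
import Mathlib

section
/- Let q ∈ ℂ with q^{1/2} - q^{-1/2} ≠ 0 and q² ≠ 1, let n ≥ 3, and fix signs ε₂,...,εₙ ∈ {+1,-1}. Define the algebra homomorphism data χ(I_{k,k-1}) = ε_k/(q^{1/2} - q^{-1/2}) for k = 2,...,n. Then these scalars satisfy all defining relations of U'_q(so_n): χ(I_{i+1,i})χ(I_{i,i-1})² - (q+q^{-1})χ(I_{i,i-1})χ(I_{i+1,i})χ(I_{i,i-1}) + χ(I_{i,i-1})²χ(I_{i+1,i}) = -χ(I_{i+1,i}), the symmetric relation with i+1,i and i,i-1 exchanged, and the commutation relations for |i-j| > 1. Hence χ extends to a one-dimensional representation of U'_q(so_n). -/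
private lemma aux_so (d e0 e1 : ℂ) (hd : d ≠ 0) (h1 : e0 ^ 2 = 1) :
    e1/d * (e0/d) ^ 2 - (d^2+2) * ((e0/d) * (e1/d) * (e0/d)) + (e0/d) ^ 2 * (e1/d) = -(e1/d) := by
  have h9 : d * d⁻¹ = 1 := mul_inv_cancel₀ hd
  field_simp
  linear_combination (-e1*d^2)*h1

/-- the scalars `χ(I_{k,k-1}) = ε_k/(q^{1/2} - q^{-1/2})`
(with `s` a square root of `q` playing the role of `q^{1/2}`) satisfy all
the defining relations (1)-(3) of `U'_q(so_n)`, hence define a one-dimensional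
representation. -/
theorem stmt_9 (q s : ℂ) (hs : s ^ 2 = q) (hsne : s - s⁻¹ ≠ 0) (hq2 : q ^ 2 ≠ 1)
    (n : ℕ) (hn : 3 ≤ n) (ε : ℕ → ℂ) (hε : ∀ k, ε k = 1 ∨ ε k = -1)
    (χ : ℕ → ℂ) (hχ : ∀ k, χ k = ε k / (s - s⁻¹)) :
    (∀ i, χ (i + 1) * χ i ^ 2 - (q + q⁻¹) * (χ i * χ (i + 1) * χ i) + χ i ^ 2 * χ (i + 1)
        = -χ (i + 1)) ∧
    (∀ i, χ (i + 1) ^ 2 * χ i - (q + q⁻¹) * (χ (i + 1) * χ i * χ (i + 1)) + χ i * χ (i + 1) ^ 2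
        = -χ i) ∧
    (∀ i j : ℕ, 1 < Int.natAbs ((i : ℤ) - (j : ℤ)) → χ i * χ j - χ j * χ i = 0) := by
  have hs0 : s ≠ 0 := by intro h; apply hsne; simp [h]
  have hε2 : ∀ k, ε k ^ 2 = 1 := by
    intro k; rcases hε k with h | h <;> simp [h]
  have hq : q + q⁻¹ = (s - s⁻¹) ^ 2 + 2 := by
    rw [← hs]; field_simp; ring
  refine ⟨fun i => ?_, fun i => ?_, fun i j _ => ?_⟩
  · rw [hχ, hχ, hq]
    exact aux_so (s - s⁻¹) (ε i) (ε (i+1)) hsne (hε2 i)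
  · rw [hχ, hχ, hq]
    linear_combination aux_so (s - s⁻¹) (ε (i+1)) (ε i) hsne (hε2 (i+1))
  · ring
end

section
/- Let q be a positive real with q ≠ 1 and let l be a positive integer. Define the (2l+1)×(2l+1) complex matrices A and B indexed by m ∈ {-l, -l+1, ..., l}: B is diagonal with B_{mm} = i·[m], and A has nonzero entries only A_{m+1,m} = ([l+m+1][l-m])^{1/2}/(q^m + q^{-m}) (for -l ≤ m < l) and A_{m-1,m} = -([l+m][l-m+1])^{1/2}/(q^m + q^{-m}) (for -l < m ≤ l), where [a] = (q^a - q^{-a})/(q - q^{-1}). Then A B² - (q+q^{-1}) B A B + B² A = -A and A² B - (q+q^{-1}) A B A + B A² = -B. -/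
/-- The q-number `[a] = (q^a - q^{-a})/(q - q⁻¹)` for real `q` and integer `a`. -/
noncomputable def qnumZ (q : ℝ) (a : ℤ) : ℝ := (q ^ a - q ^ (-a)) / (q - q⁻¹)

section Aux

variable {q : ℝ}

lemma q21_ne (hq : 0 < q) (hq1 : q ≠ 1) : q * q - 1 ≠ 0 := by
  intro h; apply hq1; nlinarith

lemma qnumZ_zero : qnumZ q 0 = 0 := by simp [qnumZ]

lemma qnum_nonneg (hq : 0 < q) (hq1 : q ≠ 1) {a : ℤ} (ha : 0 ≤ a) : 0 ≤ qnumZ q a := by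
  have hq0 : q ≠ 0 := ne_of_gt hq
  unfold qnumZ
  rcases lt_or_gt_of_ne hq1 with h1 | h1
  · rw [div_nonneg_iff]; right; constructor
    · have : q ^ a ≤ q ^ (-a) := by
        apply zpow_le_zpow_right_of_le_one₀ hq h1.le; omega
      linarith
    · have : q⁻¹ ≥ 1 := by
        rw [ge_iff_le, le_inv_comm₀] <;> simp [h1.le, hq]
      linarith
  · apply div_nonneg
    · have : q ^ (-a) ≤ q ^ a := by
        apply zpow_le_zpow_right₀ h1.le; omega
      linarith
    · have : q⁻¹ ≤ 1 := by
        rw [inv_le_one_iff₀]; right; exact h1.le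
      linarith

lemma L1 (hq : 0 < q) (hq1 : q ≠ 1) (a : ℤ) : qnumZ q a ^ 2 + qnumZ q (a+1) ^ 2
    - (q + q⁻¹) * (qnumZ q (a+1) * qnumZ q a) = 1 := by
  have hq0 : q ≠ 0 := ne_of_gt hq
  have h21 := q21_ne hq hq1
  have hx : q ^ a ≠ 0 := zpow_ne_zero _ hq0
  unfold qnumZ
  rw [show q - q⁻¹ = (q*q-1)/q from by field_simp]
  simp only [zpow_add₀ hq0, zpow_neg, zpow_one]
  generalize q ^ a = x at hx
  have h21' : q ^ 2 - 1 ≠ 0 := by rw [sq]; exact h21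
  field_simp
  ring

lemma L2 (hq : 0 < q) (hq1 : q ≠ 1) (a : ℤ) :
    qnumZ q a + qnumZ q (a+1+1) = (q + q⁻¹) * qnumZ q (a+1) := by
  have hq0 : q ≠ 0 := ne_of_gt hq
  have h21 := q21_ne hq hq1
  have hx : q ^ a ≠ 0 := zpow_ne_zero _ hq0
  unfold qnumZ
  rw [show q - q⁻¹ = (q*q-1)/q from by field_simp]
  simp only [zpow_add₀ hq0, zpow_neg, zpow_one]
  generalize q ^ a = x at hx
  field_simp
  ring

lemma negdivmul (s a b : ℝ) : (-s/a) * (s/b) = -(s*s)/(a*b) := by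
  simp only [div_eq_mul_inv, mul_inv]; ring

lemma Ldiag (hq : 0 < q) (hq1 : q ≠ 1) (l m : ℤ) (s t : ℝ)
    (hs : s * s = qnumZ q (l+m+1) * qnumZ q (l-m))
    (ht : t * t = qnumZ q (l+m) * qnumZ q (l-m+1)) :
    (-s/(q^(m+1)+q^(-(m+1)))) * (s/(q^m+q^(-m))) * (2*qnumZ q m - (q+q⁻¹)*qnumZ q (m+1))
    + (t/(q^(m-1)+q^(-(m-1)))) * (-t/(q^m+q^(-m))) * (2*qnumZ q m - (q+q⁻¹)*qnumZ q (m-1))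
    = -qnumZ q m := by
  have hq0 : q ≠ 0 := ne_of_gt hq
  have h21 := q21_ne hq hq1
  have e2 : (t/(q^(m-1)+q^(-(m-1)))) * (-t/(q^m+q^(-m)))
      = -(t*t)/((q^(m-1)+q^(-(m-1)))*(q^m+q^(-m))) := by
    rw [mul_comm, negdivmul, mul_comm (q^m+q^(-m))]
  rw [negdivmul, e2, hs, ht]
  have d0 : (0:ℝ) < q^m+q^(-m) := by positivity
  have d1 : (0:ℝ) < q^(m+1)+q^(-(m+1)) := by positivity
  have d2 : (0:ℝ) < q^(m-1)+q^(-(m-1)) := by positivity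
  unfold qnumZ
  rw [show q - q⁻¹ = (q*q-1)/q from by field_simp]
  simp only [zpow_add₀ hq0, zpow_sub₀ hq0, zpow_neg, zpow_one] at *
  have hu : q ^ m ≠ 0 := zpow_ne_zero _ hq0
  have hv : q ^ l ≠ 0 := zpow_ne_zero _ hq0
  have h21' : q ^ 2 - 1 ≠ 0 := by rw [sq]; exact h21
  field_simp at d0 d1 d2 ⊢
  try ring

lemma LdiagLow (hq : 0 < q) (hq1 : q ≠ 1) (l m : ℤ) (s : ℝ)
    (hs : s * s = qnumZ q (l+m+1) * qnumZ q (l-m))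
    (h0 : qnumZ q (l+m) = 0) :
    (-s/(q^(m+1)+q^(-(m+1)))) * (s/(q^m+q^(-m))) * (2*qnumZ q m - (q+q⁻¹)*qnumZ q (m+1))
    = -qnumZ q m := by
  have ht : (0:ℝ) * 0 = qnumZ q (l+m) * qnumZ q (l-m+1) := by rw [h0, zero_mul, zero_mul]
  have h := Ldiag hq hq1 l m s 0 hs ht
  linear_combination h

lemma LdiagHigh (hq : 0 < q) (hq1 : q ≠ 1) (l m : ℤ) (t : ℝ)
    (ht : t * t = qnumZ q (l+m) * qnumZ q (l-m+1))
    (h0 : qnumZ q (l-m) = 0) :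
    (t/(q^(m-1)+q^(-(m-1)))) * (-t/(q^m+q^(-m))) * (2*qnumZ q m - (q+q⁻¹)*qnumZ q (m-1))
    = -qnumZ q m := by
  have hs : (0:ℝ) * 0 = qnumZ q (l+m+1) * qnumZ q (l-m) := by rw [h0, mul_zero, mul_zero]
  have h := Ldiag hq hq1 l m 0 t hs ht
  linear_combination h

/-- relation-1 key factor, `b = a + 1` -/
lemma key1 (hq : 0 < q) (hq1 : q ≠ 1) (a b : ℤ) (hab : b = a + 1) :
    (Complex.I * ((qnumZ q a : ℝ) : ℂ)) * (Complex.I * ((qnumZ q a : ℝ) : ℂ))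
    - ((q : ℂ) + (q : ℂ)⁻¹) * ((Complex.I * ((qnumZ q b : ℝ) : ℂ)) * (Complex.I * ((qnumZ q a : ℝ) : ℂ)))
    + (Complex.I * ((qnumZ q b : ℝ) : ℂ)) * (Complex.I * ((qnumZ q b : ℝ) : ℂ)) = -1 := by
  subst hab
  have hr := L1 hq hq1 a
  have hc := congrArg (Complex.ofReal) hr
  push_cast at hc
  linear_combination (((qnumZ q a : ℝ) : ℂ) * ((qnumZ q a : ℝ) : ℂ)
    + ((qnumZ q (a+1) : ℝ) : ℂ) * ((qnumZ q (a+1) : ℝ) : ℂ)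
    - ((q : ℂ) + (q : ℂ)⁻¹) * (((qnumZ q (a+1) : ℝ) : ℂ) * ((qnumZ q a : ℝ) : ℂ))) * Complex.I_mul_I - hc

lemma key1' (hq : 0 < q) (hq1 : q ≠ 1) (a b : ℤ) (hab : b = a - 1) :
    (Complex.I * ((qnumZ q a : ℝ) : ℂ)) * (Complex.I * ((qnumZ q a : ℝ) : ℂ))
    - ((q : ℂ) + (q : ℂ)⁻¹) * ((Complex.I * ((qnumZ q b : ℝ) : ℂ)) * (Complex.I * ((qnumZ q a : ℝ) : ℂ)))
    + (Complex.I * ((qnumZ q b : ℝ) : ℂ)) * (Complex.I * ((qnumZ q b : ℝ) : ℂ)) = -1 := by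
  subst hab
  have hr := L1 hq hq1 (a-1)
  rw [show a - 1 + 1 = a from by ring] at hr
  have hc := congrArg (Complex.ofReal) hr
  push_cast at hc
  linear_combination (((qnumZ q (a-1) : ℝ) : ℂ) * ((qnumZ q (a-1) : ℝ) : ℂ)
    + ((qnumZ q a : ℝ) : ℂ) * ((qnumZ q a : ℝ) : ℂ)
    - ((q : ℂ) + (q : ℂ)⁻¹) * (((qnumZ q a : ℝ) : ℂ) * ((qnumZ q (a-1) : ℝ) : ℂ))) * Complex.I_mul_I - hc

/-- off-diagonal bracket, ascending -/
lemma brackP (hq : 0 < q) (hq1 : q ≠ 1) (a b c : ℤ) (hb : b = a + 1) (hc : c = a + 2) :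
    Complex.I * ((qnumZ q a : ℝ) : ℂ)
    - ((q : ℂ) + (q : ℂ)⁻¹) * (Complex.I * ((qnumZ q b : ℝ) : ℂ))
    + Complex.I * ((qnumZ q c : ℝ) : ℂ) = 0 := by
  subst hb hc
  rw [show a + 2 = a + 1 + 1 from by ring]
  have hr := L2 hq hq1 a
  have hcc := congrArg (Complex.ofReal) hr
  push_cast at hcc
  linear_combination Complex.I * hcc

lemma brackM (hq : 0 < q) (hq1 : q ≠ 1) (a b c : ℤ) (hb : b = a - 1) (hc : c = a - 2) :
    Complex.I * ((qnumZ q a : ℝ) : ℂ)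
    - ((q : ℂ) + (q : ℂ)⁻¹) * (Complex.I * ((qnumZ q b : ℝ) : ℂ))
    + Complex.I * ((qnumZ q c : ℝ) : ℂ) = 0 := by
  subst hb hc
  have hr := L2 hq hq1 (a-2)
  rw [show a - 2 + 1 + 1 = a from by ring, show a - 2 + 1 = a - 1 from by ring] at hr
  have hcc := congrArg (Complex.ofReal) hr
  push_cast at hcc
  linear_combination Complex.I * hcc

end Aux

section Leaf

variable {q : ℝ}

lemma cDiagBoth (hq : 0 < q) (hq1 : q ≠ 1) (L J : ℤ) (h1 : 1 ≤ J) (h2 : J ≤ 2 * L - 1) :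
    -((Real.sqrt (qnumZ q (L + (J + 1 - L)) * qnumZ q (L - (J + 1 - L) + 1))
        / (q ^ (J + 1 - L) + q ^ (-(J + 1 - L))) : ℝ) : ℂ) *
      ((Real.sqrt (qnumZ q (L + (J - L) + 1) * qnumZ q (L - (J - L)))
        / (q ^ (J - L) + q ^ (-(J - L))) : ℝ) : ℂ) *
      (Complex.I * ((qnumZ q (J - L) : ℝ) : ℂ))
    - ((q : ℂ) + (q : ℂ)⁻¹) *
      (-((Real.sqrt (qnumZ q (L + (J + 1 - L)) * qnumZ q (L - (J + 1 - L) + 1))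
          / (q ^ (J + 1 - L) + q ^ (-(J + 1 - L))) : ℝ) : ℂ) *
        (Complex.I * ((qnumZ q (J + 1 - L) : ℝ) : ℂ)) *
        ((Real.sqrt (qnumZ q (L + (J - L) + 1) * qnumZ q (L - (J - L)))
          / (q ^ (J - L) + q ^ (-(J - L))) : ℝ) : ℂ))
    + Complex.I * ((qnumZ q (J - L) : ℝ) : ℂ) *
      (-((Real.sqrt (qnumZ q (L + (J + 1 - L)) * qnumZ q (L - (J + 1 - L) + 1))
          / (q ^ (J + 1 - L) + q ^ (-(J + 1 - L))) : ℝ) : ℂ) *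
        ((Real.sqrt (qnumZ q (L + (J - L) + 1) * qnumZ q (L - (J - L)))
          / (q ^ (J - L) + q ^ (-(J - L))) : ℝ) : ℂ))
    + (((Real.sqrt (qnumZ q (L + (J - 1 - L) + 1) * qnumZ q (L - (J - 1 - L)))
          / (q ^ (J - 1 - L) + q ^ (-(J - 1 - L))) : ℝ) : ℂ) *
        -((Real.sqrt (qnumZ q (L + (J - L)) * qnumZ q (L - (J - L) + 1))
          / (q ^ (J - L) + q ^ (-(J - L))) : ℝ) : ℂ) *
        (Complex.I * ((qnumZ q (J - L) : ℝ) : ℂ))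
      - ((q : ℂ) + (q : ℂ)⁻¹) *
        (((Real.sqrt (qnumZ q (L + (J - 1 - L) + 1) * qnumZ q (L - (J - 1 - L)))
            / (q ^ (J - 1 - L) + q ^ (-(J - 1 - L))) : ℝ) : ℂ) *
          (Complex.I * ((qnumZ q (J - 1 - L) : ℝ) : ℂ)) *
          -((Real.sqrt (qnumZ q (L + (J - L)) * qnumZ q (L - (J - L) + 1))
            / (q ^ (J - L) + q ^ (-(J - L))) : ℝ) : ℂ))
      + Complex.I * ((qnumZ q (J - L) : ℝ) : ℂ) *
        (((Real.sqrt (qnumZ q (L + (J - 1 - L) + 1) * qnumZ q (L - (J - 1 - L)))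
            / (q ^ (J - 1 - L) + q ^ (-(J - 1 - L))) : ℝ) : ℂ) *
          -((Real.sqrt (qnumZ q (L + (J - L)) * qnumZ q (L - (J - L) + 1))
            / (q ^ (J - L) + q ^ (-(J - L))) : ℝ) : ℂ)))
    = -(Complex.I * ((qnumZ q (J - L) : ℝ) : ℂ)) := by
  simp only [show J + 1 - L = J - L + 1 from by ring, show J - 1 - L = J - L - 1 from by ring,
    show L + (J - L + 1) = L + (J - L) + 1 from by ring,
    show L - (J - L + 1) + 1 = L - (J - L) from by ring,
    show L + (J - L - 1) + 1 = L + (J - L) from by ring,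
    show L - (J - L - 1) = L - (J - L) + 1 from by ring]
  have hs : Real.sqrt (qnumZ q (L + (J - L) + 1) * qnumZ q (L - (J - L)))
      * Real.sqrt (qnumZ q (L + (J - L) + 1) * qnumZ q (L - (J - L)))
      = qnumZ q (L + (J - L) + 1) * qnumZ q (L - (J - L)) :=
    Real.mul_self_sqrt (mul_nonneg (qnum_nonneg hq hq1 (by omega)) (qnum_nonneg hq hq1 (by omega)))
  have ht : Real.sqrt (qnumZ q (L + (J - L)) * qnumZ q (L - (J - L) + 1))
      * Real.sqrt (qnumZ q (L + (J - L)) * qnumZ q (L - (J - L) + 1))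
      = qnumZ q (L + (J - L)) * qnumZ q (L - (J - L) + 1) :=
    Real.mul_self_sqrt (mul_nonneg (qnum_nonneg hq hq1 (by omega)) (qnum_nonneg hq hq1 (by omega)))
  have hr := Ldiag hq hq1 L (J - L) _ _ hs ht
  have hc := congrArg (Complex.ofReal) hr
  push_cast at hc ⊢
  linear_combination Complex.I * hc

lemma cDiagLow (hq : 0 < q) (hq1 : q ≠ 1) (L J : ℤ) (hJ : J = 0) (hL : 1 ≤ L) :
    -((Real.sqrt (qnumZ q (L + (J + 1 - L)) * qnumZ q (L - (J + 1 - L) + 1))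
        / (q ^ (J + 1 - L) + q ^ (-(J + 1 - L))) : ℝ) : ℂ) *
      ((Real.sqrt (qnumZ q (L + (J - L) + 1) * qnumZ q (L - (J - L)))
        / (q ^ (J - L) + q ^ (-(J - L))) : ℝ) : ℂ) *
      (Complex.I * ((qnumZ q (J - L) : ℝ) : ℂ))
    - ((q : ℂ) + (q : ℂ)⁻¹) *
      (-((Real.sqrt (qnumZ q (L + (J + 1 - L)) * qnumZ q (L - (J + 1 - L) + 1))
          / (q ^ (J + 1 - L) + q ^ (-(J + 1 - L))) : ℝ) : ℂ) *
        (Complex.I * ((qnumZ q (J + 1 - L) : ℝ) : ℂ)) *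
        ((Real.sqrt (qnumZ q (L + (J - L) + 1) * qnumZ q (L - (J - L)))
          / (q ^ (J - L) + q ^ (-(J - L))) : ℝ) : ℂ))
    + Complex.I * ((qnumZ q (J - L) : ℝ) : ℂ) *
      (-((Real.sqrt (qnumZ q (L + (J + 1 - L)) * qnumZ q (L - (J + 1 - L) + 1))
          / (q ^ (J + 1 - L) + q ^ (-(J + 1 - L))) : ℝ) : ℂ) *
        ((Real.sqrt (qnumZ q (L + (J - L) + 1) * qnumZ q (L - (J - L)))
          / (q ^ (J - L) + q ^ (-(J - L))) : ℝ) : ℂ))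
    = -(Complex.I * ((qnumZ q (J - L) : ℝ) : ℂ)) := by
  simp only [show J + 1 - L = J - L + 1 from by ring,
    show L + (J - L + 1) = L + (J - L) + 1 from by ring,
    show L - (J - L + 1) + 1 = L - (J - L) from by ring]
  have hs : Real.sqrt (qnumZ q (L + (J - L) + 1) * qnumZ q (L - (J - L)))
      * Real.sqrt (qnumZ q (L + (J - L) + 1) * qnumZ q (L - (J - L)))
      = qnumZ q (L + (J - L) + 1) * qnumZ q (L - (J - L)) :=
    Real.mul_self_sqrt (mul_nonneg (qnum_nonneg hq hq1 (by omega)) (qnum_nonneg hq hq1 (by omega)))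
  have h0 : qnumZ q (L + (J - L)) = 0 := by
    rw [show L + (J - L) = 0 from by omega]; exact qnumZ_zero
  have hr := LdiagLow hq hq1 L (J - L) _ hs h0
  have hc := congrArg (Complex.ofReal) hr
  push_cast at hc ⊢
  linear_combination Complex.I * hc

lemma cDiagHigh (hq : 0 < q) (hq1 : q ≠ 1) (L J : ℤ) (hJ : J = 2 * L) (hL : 1 ≤ L) :
    (((Real.sqrt (qnumZ q (L + (J - 1 - L) + 1) * qnumZ q (L - (J - 1 - L)))
          / (q ^ (J - 1 - L) + q ^ (-(J - 1 - L))) : ℝ) : ℂ) *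
        -((Real.sqrt (qnumZ q (L + (J - L)) * qnumZ q (L - (J - L) + 1))
          / (q ^ (J - L) + q ^ (-(J - L))) : ℝ) : ℂ) *
        (Complex.I * ((qnumZ q (J - L) : ℝ) : ℂ))
      - ((q : ℂ) + (q : ℂ)⁻¹) *
        (((Real.sqrt (qnumZ q (L + (J - 1 - L) + 1) * qnumZ q (L - (J - 1 - L)))
            / (q ^ (J - 1 - L) + q ^ (-(J - 1 - L))) : ℝ) : ℂ) *
          (Complex.I * ((qnumZ q (J - 1 - L) : ℝ) : ℂ)) *
          -((Real.sqrt (qnumZ q (L + (J - L)) * qnumZ q (L - (J - L) + 1))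
            / (q ^ (J - L) + q ^ (-(J - L))) : ℝ) : ℂ))
      + Complex.I * ((qnumZ q (J - L) : ℝ) : ℂ) *
        (((Real.sqrt (qnumZ q (L + (J - 1 - L) + 1) * qnumZ q (L - (J - 1 - L)))
            / (q ^ (J - 1 - L) + q ^ (-(J - 1 - L))) : ℝ) : ℂ) *
          -((Real.sqrt (qnumZ q (L + (J - L)) * qnumZ q (L - (J - L) + 1))
            / (q ^ (J - L) + q ^ (-(J - L))) : ℝ) : ℂ)))
    = -(Complex.I * ((qnumZ q (J - L) : ℝ) : ℂ)) := by
  simp only [show J - 1 - L = J - L - 1 from by ring,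
    show L + (J - L - 1) + 1 = L + (J - L) from by ring,
    show L - (J - L - 1) = L - (J - L) + 1 from by ring]
  have ht : Real.sqrt (qnumZ q (L + (J - L)) * qnumZ q (L - (J - L) + 1))
      * Real.sqrt (qnumZ q (L + (J - L)) * qnumZ q (L - (J - L) + 1))
      = qnumZ q (L + (J - L)) * qnumZ q (L - (J - L) + 1) :=
    Real.mul_self_sqrt (mul_nonneg (qnum_nonneg hq hq1 (by omega)) (qnum_nonneg hq hq1 (by omega)))
  have h0 : qnumZ q (L - (J - L)) = 0 := by
    rw [show L - (J - L) = 0 from by omega]; exact qnumZ_zero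
  have hr := LdiagHigh hq hq1 L (J - L) _ ht h0
  have hc := congrArg (Complex.ofReal) hr
  push_cast at hc ⊢
  linear_combination Complex.I * hc

end Leaf

lemma sum_coe_eq {N : ℕ} (f : Fin N → ℂ) (t : ℤ) (k : Fin N) (hk : (k : ℤ) = t) :
    ∑ k' : Fin N, (if (k' : ℤ) = t then f k' else 0) = f k := by
  rw [Finset.sum_eq_single k]
  · rw [if_pos hk]
  · intro b _ hb
    rw [if_neg]
    intro hc
    apply hb
    apply Fin.ext
    show (b : ℕ) = (k : ℕ)
    omega
  · simp

lemma sum_coe_zero {N : ℕ} (f : Fin N → ℂ) (t : ℤ) (h : t < 0 ∨ (N : ℤ) ≤ t) :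
    ∑ k : Fin N, (if (k : ℤ) = t then f k else 0) = 0 := by
  apply Finset.sum_eq_zero
  intro k _
  rw [if_neg]
  have := k.isLt
  omega

lemma sum_two {N : ℕ} (f : Fin N → ℂ) (t₁ t₂ : ℤ) (hne : t₁ ≠ t₂)
    (hz : ∀ k : Fin N, (k : ℤ) ≠ t₁ → (k : ℤ) ≠ t₂ → f k = 0) :
    ∑ k : Fin N, f k =
      (∑ k : Fin N, if (k : ℤ) = t₁ then f k else 0)
      + (∑ k : Fin N, if (k : ℤ) = t₂ then f k else 0) := by
  rw [← Finset.sum_add_distrib]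
  apply Finset.sum_congr rfl
  intro k _
  by_cases h1 : (k : ℤ) = t₁
  · rw [if_pos h1, if_neg (by omega), add_zero]
  · by_cases h2 : (k : ℤ) = t₂
    · rw [if_neg h1, if_pos h2, zero_add]
    · rw [if_neg h1, if_neg h2, add_zero]; exact hz k h1 h2

/-- the classical-type representation `T_l` of `U'_q(so_3)`:
the matrices `A = T_l(I_{32})` and `B = T_l(I_{21})`, indexed by `m = -l, ..., l`
(here row/column `i, j ∈ Fin (2l+1)` correspond to `m = i - l`, `m = j - l`),
satisfy both cubic defining relations. -/
theorem stmt_11 (q : ℝ) (hq : 0 < q) (hq1 : q ≠ 1) (l : ℕ) (hl : 1 ≤ l)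
    (A B : Matrix (Fin (2 * l + 1)) (Fin (2 * l + 1)) ℂ)
    (hB : B = Matrix.diagonal fun i : Fin (2 * l + 1) => Complex.I * (qnumZ q ((i : ℤ) - l) : ℂ))
    (hA : A = Matrix.of fun i j : Fin (2 * l + 1) =>
      if (i : ℤ) = (j : ℤ) + 1 then
        ((Real.sqrt (qnumZ q ((l : ℤ) + ((j : ℤ) - l) + 1) * qnumZ q ((l : ℤ) - ((j : ℤ) - l)))
          / (q ^ ((j : ℤ) - l) + q ^ (-((j : ℤ) - (l : ℤ)))) : ℝ) : ℂ)
      else if (i : ℤ) = (j : ℤ) - 1 then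
        -((Real.sqrt (qnumZ q ((l : ℤ) + ((j : ℤ) - l)) * qnumZ q ((l : ℤ) - ((j : ℤ) - l) + 1))
          / (q ^ ((j : ℤ) - l) + q ^ (-((j : ℤ) - (l : ℤ)))) : ℝ) : ℂ)
      else 0) :
    A * B ^ 2 - ((q : ℂ) + (q : ℂ)⁻¹) • (B * A * B) + B ^ 2 * A = -A ∧
    A ^ 2 * B - ((q : ℂ) + (q : ℂ)⁻¹) • (A * B * A) + B * A ^ 2 = -B := by
  subst hB
  have hAz : ∀ i j : Fin (2 * l + 1), (i : ℤ) ≠ (j : ℤ) + 1 → (i : ℤ) ≠ (j : ℤ) - 1 →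
      A i j = 0 := by
    intro i j h1 h2
    rw [hA]
    simp only [Matrix.of_apply]
    rw [if_neg h1, if_neg h2]
  constructor
  · ext i j
    simp only [pow_two, Matrix.diagonal_mul_diagonal, Matrix.mul_diagonal, Matrix.diagonal_mul,
      Matrix.sub_apply, Matrix.add_apply, Matrix.smul_apply, Matrix.neg_apply, smul_eq_mul,
      Pi.mul_apply]
    by_cases h1 : (i : ℤ) = (j : ℤ) + 1
    · have hb := key1 hq hq1 ((j : ℤ) - l) ((i : ℤ) - l) (by omega)
      linear_combination (A i j) * hb
    · by_cases h2 : (i : ℤ) = (j : ℤ) - 1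
      · have hb := key1' hq hq1 ((j : ℤ) - l) ((i : ℤ) - l) (by omega)
        linear_combination (A i j) * hb
      · rw [hAz i j h1 h2]
        ring
  · have key : ∀ i j : Fin (2 * l + 1),
        (A * Matrix.diagonal (fun i : Fin (2 * l + 1) => Complex.I * (qnumZ q ((i : ℤ) - l) : ℂ)) * A) i j
        = ∑ k, A i k * (Complex.I * (qnumZ q ((k : ℤ) - l) : ℂ)) * A k j := by
      intro i j
      rw [Matrix.mul_apply]
      apply Finset.sum_congr rfl
      intro k _
      rw [Matrix.mul_diagonal]
    ext i j
    simp only [pow_two, Matrix.sub_apply, Matrix.add_apply, Matrix.smul_apply, Matrix.neg_apply,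
      smul_eq_mul, key, Matrix.mul_diagonal, Matrix.diagonal_mul]
    simp only [Matrix.mul_apply]
    rw [Finset.sum_mul, Finset.mul_sum, Finset.mul_sum, ← Finset.sum_sub_distrib,
      ← Finset.sum_add_distrib]
    by_cases hij : (i : ℤ) = (j : ℤ)
    · have hij' : i = j := Fin.ext (by omega)
      subst hij'
      rw [Matrix.diagonal_apply_eq]
      rw [sum_two _ ((i : ℤ) + 1) ((i : ℤ) - 1) (by omega)
        (by
          intro k hk1 hk2
          rw [hAz i k (by omega) (by omega)]
          ring)]
      have hiN := i.isLt
      by_cases hlow : (i : ℕ) = 0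
      · rw [sum_coe_eq _ _ (⟨(i : ℕ) + 1, by omega⟩ : Fin (2 * l + 1))
            (by show (((i : ℕ) + 1 : ℕ) : ℤ) = _; omega),
          sum_coe_zero _ _ (by left; omega), add_zero]
        rw [hA]
        simp only [Matrix.of_apply]
        have hk1 : ((⟨(i : ℕ) + 1, by omega⟩ : Fin (2 * l + 1)) : ℤ) = (i : ℤ) + 1 := by
          show (((i : ℕ) + 1 : ℕ) : ℤ) = _; omega
        simp only [hk1]
        split_ifs <;> try (exfalso; omega)
        exact cDiagLow hq hq1 (l : ℤ) ((i : ℕ) : ℤ) (by omega) (by omega)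
      · by_cases hhigh : (i : ℕ) = 2 * l
        · rw [sum_coe_zero _ _ (by right; omega),
            sum_coe_eq _ _ (⟨(i : ℕ) - 1, by omega⟩ : Fin (2 * l + 1))
              (by show (((i : ℕ) - 1 : ℕ) : ℤ) = _; omega), zero_add]
          rw [hA]
          simp only [Matrix.of_apply]
          have hk2 : ((⟨(i : ℕ) - 1, by omega⟩ : Fin (2 * l + 1)) : ℤ) = (i : ℤ) - 1 := by
            show (((i : ℕ) - 1 : ℕ) : ℤ) = _; omega
          simp only [hk2]
          split_ifs <;> try (exfalso; omega)
          exact cDiagHigh hq hq1 (l : ℤ) ((i : ℕ) : ℤ) (by omega) (by omega)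
        · rw [sum_coe_eq _ _ (⟨(i : ℕ) + 1, by omega⟩ : Fin (2 * l + 1))
              (by show (((i : ℕ) + 1 : ℕ) : ℤ) = _; omega),
            sum_coe_eq _ _ (⟨(i : ℕ) - 1, by omega⟩ : Fin (2 * l + 1))
              (by show (((i : ℕ) - 1 : ℕ) : ℤ) = _; omega)]
          rw [hA]
          simp only [Matrix.of_apply]
          have hk1 : ((⟨(i : ℕ) + 1, by omega⟩ : Fin (2 * l + 1)) : ℤ) = (i : ℤ) + 1 := by
            show (((i : ℕ) + 1 : ℕ) : ℤ) = _; omega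
          have hk2 : ((⟨(i : ℕ) - 1, by omega⟩ : Fin (2 * l + 1)) : ℤ) = (i : ℤ) - 1 := by
            show (((i : ℕ) - 1 : ℕ) : ℤ) = _; omega
          simp only [hk1, hk2]
          split_ifs <;> try (exfalso; omega)
          exact cDiagBoth hq hq1 (l : ℤ) ((i : ℕ) : ℤ) (by omega) (by omega)
    · rw [Matrix.diagonal_apply_ne _ (fun h => hij (by rw [h])), neg_zero]
      apply Finset.sum_eq_zero
      intro k _
      by_cases hk1 : (k : ℤ) = (j : ℤ) + 1
      · by_cases hi2 : (i : ℤ) = (j : ℤ) + 2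
        · have hb := brackP hq hq1 ((j : ℤ) - l) ((k : ℤ) - l) ((i : ℤ) - l)
            (by omega) (by omega)
          linear_combination (A i k * A k j) * hb
        · rw [hAz i k (by omega) (by omega)]
          ring
      · by_cases hk2 : (k : ℤ) = (j : ℤ) - 1
        · by_cases hi2 : (i : ℤ) = (j : ℤ) - 2
          · have hb := brackM hq hq1 ((j : ℤ) - l) ((k : ℤ) - l) ((i : ℤ) - l)
              (by omega) (by omega)
            linear_combination (A i k * A k j) * hb
          · rw [hAz i k (by omega) (by omega)]
            ring
        · rw [hAz k j (by omega) (by omega)]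
          ring
end

section
/- Let q be a positive real with q ≠ 1, let l be a positive half-odd-integer (l ∈ ℤ + 1/2, l ≥ 1/2), and fix ε₂, ε₃ ∈ {±1}. Define matrices A, B indexed by m ∈ {1/2, 3/2, ..., l}: B is diagonal with B_{mm} = ε₂·[m]₊ where [a]₊ = (q^a + q^{-a})/(q - q^{-1}); A has entries A_{1/2,1/2} = ε₃·[l + 1/2]/(q^{1/2} - q^{-1/2}), A_{m+1,m} = ([l+m+1][l-m])^{1/2}/(q^m - q^{-m}) for 1/2 ≤ m < l, A_{m-1,m} = -([l+m][l-m+1])^{1/2}/(q^m - q^{-m}) for 1/2 < m ≤ l, and all other entries zero, where [a] = (q^a - q^{-a})/(q - q^{-1}). Then A B² - (q+q^{-1}) B A B + B² A = -A and A² B - (q+q^{-1}) A B A + B A² = -B. -/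
/-- The 'plus' q-number `[a]₊ = (q^a + q^{-a})/(q - q⁻¹)` for real `a`. -/
noncomputable def qnumPlus (q : ℝ) (a : ℝ) : ℝ := (q ^ a + q ^ (-a)) / (q - q⁻¹)

/-! ### Auxiliary general lemmas -/

private lemma subinv_ne_zero {x : ℝ} (hx : 0 < x) (hx1 : x ≠ 1) : x - x⁻¹ ≠ 0 := by
  have hx0 : x ≠ 0 := hx.ne'
  have h : x - x⁻¹ = (x - 1) * (x + 1) / x := by field_simp; ring
  rw [h]
  exact div_ne_zero (mul_ne_zero (sub_ne_zero.2 hx1) (by positivity)) hx0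

private lemma mulself_sub_one_ne {x : ℝ} (hx : 0 < x) (hx1 : x ≠ 1) : x * x - 1 ≠ 0 := by
  intro h
  apply hx1
  nlinarith

private lemma rpow_ne_one' {q y : ℝ} (hq : 0 < q) (hq1 : q ≠ 1) (hy : y ≠ 0) : q ^ y ≠ 1 := by
  intro h
  have h2 : y * Real.log q = 0 := by rw [← Real.log_rpow hq, h, Real.log_one]
  rcases mul_eq_zero.1 h2 with h3 | h3
  · exact hy h3
  · rcases Real.log_eq_zero.1 h3 with h4 | h4 | h4
    · exact hq.ne' h4
    · exact hq1 h4
    · linarith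

private lemma qnumZ_nonneg {q : ℝ} (hq : 0 < q) (hq1 : q ≠ 1) {n : ℤ} (hn : 0 ≤ n) :
    0 ≤ qnumZ q n := by
  unfold qnumZ
  rcases lt_or_gt_of_ne hq1 with h | h
  · apply div_nonneg_of_nonpos
    · have : q ^ n ≤ q ^ (-n) := zpow_le_zpow_right_of_le_one₀ hq h.le (by omega)
      linarith
    · have h1 : 1 ≤ q⁻¹ := (one_le_inv₀ hq).2 h.le
      linarith
  · apply div_nonneg
    · have : q ^ (-n) ≤ q ^ n := zpow_le_zpow_right₀ h.le (by omega)
      linarith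
    · have : q⁻¹ ≤ 1 := inv_le_one_of_one_le₀ h.le
      linarith

private lemma sum_eq_pair {k : ℕ} (f : Fin k → ℝ) (a b : Fin k) (hab : a ≠ b)
    (h : ∀ c, c ≠ a → c ≠ b → f c = 0) : ∑ m, f m = f a + f b := by
  rw [← Finset.sum_pair hab]
  apply (Finset.sum_subset (Finset.subset_univ _) ?_).symm
  intro x _ hx
  simp only [Finset.mem_insert, Finset.mem_singleton, not_or] at hx
  exact h x hx.1 hx.2

private lemma neg_sqrt_mul {x : ℝ} (hx : 0 ≤ x) (d₁ d₂ : ℝ) :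
    -(Real.sqrt x / d₁) * (Real.sqrt x / d₂) = -(x / (d₁ * d₂)) := by
  have h : Real.sqrt x * Real.sqrt x = x := Real.mul_self_sqrt hx
  calc -(Real.sqrt x / d₁) * (Real.sqrt x / d₂)
      = -(Real.sqrt x * Real.sqrt x / (d₁ * d₂)) := by ring
    _ = -(x / (d₁ * d₂)) := by rw [h]

private lemma sqrt_mul_neg {x : ℝ} (hx : 0 ≤ x) (d₁ d₂ : ℝ) :
    Real.sqrt x / d₁ * -(Real.sqrt x / d₂) = -(x / (d₁ * d₂)) := by
  rw [mul_comm, neg_sqrt_mul hx d₂ d₁, mul_comm d₂ d₁]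

/-! ### Scalar identities -/

private lemma SL1 (q T : ℝ) (hq0 : q ≠ 0) (hT : T ≠ 0) (hs : q * q - 1 ≠ 0) :
    ((T + T⁻¹)/(q - q⁻¹))^2 + ((q*T + (q*T)⁻¹)/(q - q⁻¹))^2
      - (q + q⁻¹)*(((T + T⁻¹)/(q - q⁻¹))*((q*T + (q*T)⁻¹)/(q - q⁻¹))) + 1 = 0 := by
  have : q ^ 2 - 1 ≠ 0 := by convert hs using 1; ring
  field_simp
  ring

private lemma SL1c (q r : ℝ) (hqr : r * r = q) (hr : r ≠ 0) (hs : q * q - 1 ≠ 0) :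
    ((r + r⁻¹)/(q - q⁻¹))^2 + ((r + r⁻¹)/(q - q⁻¹))^2
      - (q + q⁻¹)*(((r + r⁻¹)/(q - q⁻¹))*((r + r⁻¹)/(q - q⁻¹))) + 1 = 0 := by
  subst hqr
  have : r ^ 4 - 1 ≠ 0 := by convert hs using 1; ring
  field_simp
  ring

private lemma SLmid (q T : ℝ) (hq0 : q ≠ 0) (hT : T ≠ 0) (hs : q * q - 1 ≠ 0) :
    (T + T⁻¹)/(q - q⁻¹) + (q*(q*T) + (q*(q*T))⁻¹)/(q - q⁻¹)
      - (q + q⁻¹)*((q*T + (q*T)⁻¹)/(q - q⁻¹)) = 0 := by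
  field_simp
  ring

private lemma SLcoff (q r : ℝ) (hqr : r * r = q) (hr : r ≠ 0) (hs : q * q - 1 ≠ 0) :
    (r + r⁻¹)/(q - q⁻¹) + (q*r + (q*r)⁻¹)/(q - q⁻¹)
      - (q + q⁻¹)*((r + r⁻¹)/(q - q⁻¹)) = 0 := by
  subst hqr
  field_simp
  ring

set_option maxHeartbeats 2000000 in
private lemma SLint (q r u y : ℝ) (hqr : r * r = q) (hr : r ≠ 0) (hu : u ≠ 0) (hy : y ≠ 0)
    (hs : q * q - 1 ≠ 0)
    (hD0 : u*r*(u*r) - 1 ≠ 0) (hD1 : u*q*r*(u*q*r) - 1 ≠ 0)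
    (hD2 : u*q*q*r*(u*q*q*r) - 1 ≠ 0) :
    -( ((y*(u*u)*q*q*q - (y*(u*u)*q*q*q)⁻¹)/(q - q⁻¹)) * ((y/q - (y/q)⁻¹)/(q - q⁻¹))
        / ((u*q*q*r - (u*q*q*r)⁻¹) * (u*q*r - (u*q*r)⁻¹)) )
      * (2*((u*q*r + (u*q*r)⁻¹)/(q - q⁻¹)) - (q + q⁻¹)*((u*q*q*r + (u*q*q*r)⁻¹)/(q - q⁻¹)))
    - ( ((y*(u*u)*q*q - (y*(u*u)*q*q)⁻¹)/(q - q⁻¹)) * ((y - y⁻¹)/(q - q⁻¹))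
        / ((u*r - (u*r)⁻¹) * (u*q*r - (u*q*r)⁻¹)) )
      * (2*((u*q*r + (u*q*r)⁻¹)/(q - q⁻¹)) - (q + q⁻¹)*((u*r + (u*r)⁻¹)/(q - q⁻¹)))
    = -((u*q*r + (u*q*r)⁻¹)/(q - q⁻¹)) := by
  subst hqr
  have : r ^ 4 - 1 ≠ 0 := by convert hs using 1; ring
  have : u ^ 2 * r ^ 2 - 1 ≠ 0 := by convert hD0 using 1; ring
  have : u ^ 2 * r ^ 6 - 1 ≠ 0 := by convert hD1 using 1; ring
  have : u ^ 2 * r ^ 10 - 1 ≠ 0 := by convert hD2 using 1; ring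
  field_simp
  ring

set_option maxHeartbeats 2000000 in
private lemma SLbnd (q r u : ℝ) (hqr : r * r = q) (hr : r ≠ 0) (hu : u ≠ 0)
    (hs : q * q - 1 ≠ 0) (hD0 : u*r*(u*r) - 1 ≠ 0) (hD1 : u*q*r*(u*q*r) - 1 ≠ 0) :
    -( ((u*u*q*q*q - (u*u*q*q*q)⁻¹)/(q - q⁻¹)) * ((q - q⁻¹)/(q - q⁻¹))
        / ((u*r - (u*r)⁻¹) * (u*q*r - (u*q*r)⁻¹)) )
      * (2*((u*q*r + (u*q*r)⁻¹)/(q - q⁻¹)) - (q + q⁻¹)*((u*r + (u*r)⁻¹)/(q - q⁻¹)))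
    = -((u*q*r + (u*q*r)⁻¹)/(q - q⁻¹)) := by
  subst hqr
  have : r ^ 4 - 1 ≠ 0 := by convert hs using 1; ring
  have : u ^ 2 * r ^ 2 - 1 ≠ 0 := by convert hD0 using 1; ring
  have : u ^ 2 * r ^ 6 - 1 ≠ 0 := by convert hD1 using 1; ring
  field_simp
  ring

set_option maxHeartbeats 2000000 in
private lemma SLcorner (q r w : ℝ) (hqr : r * r = q) (hr : r ≠ 0) (hw : w ≠ 0)
    (hs : q * q - 1 ≠ 0) (hD0 : r*r - 1 ≠ 0) (hD1 : q*r*(q*r) - 1 ≠ 0) :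
    (w - w⁻¹)/(q - q⁻¹)/(r - r⁻¹) * ((w - w⁻¹)/(q - q⁻¹)/(r - r⁻¹))
      * (2*((r + r⁻¹)/(q - q⁻¹)) - (q + q⁻¹)*((r + r⁻¹)/(q - q⁻¹)))
    - ( ((w*q - (w*q)⁻¹)/(q - q⁻¹)) * ((w/q - (w/q)⁻¹)/(q - q⁻¹))
        / ((q*r - (q*r)⁻¹) * (r - r⁻¹)) )
      * (2*((r + r⁻¹)/(q - q⁻¹)) - (q + q⁻¹)*((q*r + (q*r)⁻¹)/(q - q⁻¹)))
    = -((r + r⁻¹)/(q - q⁻¹)) := by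
  subst hqr
  have : r ^ 4 - 1 ≠ 0 := by convert hs using 1; ring
  have : r ^ 2 - 1 ≠ 0 := by convert hD0 using 1; ring
  have : r ^ 6 - 1 ≠ 0 := by convert hD1 using 1; ring
  field_simp
  ring

private lemma SLcorner1 (q r : ℝ) (hqr : r * r = q) (hr : r ≠ 0)
    (hs : q * q - 1 ≠ 0) (hD0 : r*r - 1 ≠ 0) :
    (q - q⁻¹)/(q - q⁻¹)/(r - r⁻¹) * ((q - q⁻¹)/(q - q⁻¹)/(r - r⁻¹))
      * (2*((r + r⁻¹)/(q - q⁻¹)) - (q + q⁻¹)*((r + r⁻¹)/(q - q⁻¹)))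
    = -((r + r⁻¹)/(q - q⁻¹)) := by
  subst hqr
  have : r ^ 4 - 1 ≠ 0 := by convert hs using 1; ring
  have : r ^ 2 - 1 ≠ 0 := by convert hD0 using 1; ring
  field_simp
  ring

/-! ### The real matrix entries -/

private noncomputable def dn (q ε₂ : ℝ) (m : ℕ) : ℝ := ε₂ * qnumPlus q ((2 * (m : ℝ) + 1) / 2)

private noncomputable def an (q ε₃ : ℝ) (k i j : ℕ) : ℝ :=
  if i = 0 ∧ j = 0 then ε₃ * qnumZ q (k : ℤ) / (q ^ ((1 : ℝ) / 2) - q ^ (-(1 : ℝ) / 2))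
  else if i = j + 1 then
    Real.sqrt (qnumZ q ((k : ℤ) + (j : ℤ) + 1) * qnumZ q ((k : ℤ) - (j : ℤ) - 1)) /
      (q ^ ((2 * (j : ℝ) + 1) / 2) - q ^ (-(2 * (j : ℝ) + 1) / 2))
  else if j = i + 1 then
    -(Real.sqrt (qnumZ q ((k : ℤ) + (j : ℤ)) * qnumZ q ((k : ℤ) - (j : ℤ))) /
      (q ^ ((2 * (j : ℝ) + 1) / 2) - q ^ (-(2 * (j : ℝ) + 1) / 2)))
  else 0

private lemma an_eq_zero (q ε₃ : ℝ) (k : ℕ) {i j : ℕ} (h1 : ¬(i = 0 ∧ j = 0))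
    (h2 : i ≠ j + 1) (h3 : j ≠ i + 1) : an q ε₃ k i j = 0 := by
  rw [an, if_neg h1, if_neg h2, if_neg h3]

private lemma an_cases (q ε₃ : ℝ) (k i j : ℕ) :
    an q ε₃ k i j = 0 ∨ ((i = 0 ∧ j = 0) ∨ i = j + 1 ∨ j = i + 1) := by
  by_cases h1 : i = 0 ∧ j = 0
  · exact Or.inr (Or.inl h1)
  by_cases h2 : i = j + 1
  · exact Or.inr (Or.inr (Or.inl h2))
  by_cases h3 : j = i + 1
  · exact Or.inr (Or.inr (Or.inr h3))
  exact Or.inl (an_eq_zero q ε₃ k h1 h2 h3)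

/-! ### Power rewriting -/

private lemma pw1 {q : ℝ} (hq : 0 < q) (a : ℕ) :
    q ^ ((2 * (a : ℝ) + 1) / 2) = q ^ a * q ^ ((1 : ℝ) / 2) := by
  rw [show (2 * (a : ℝ) + 1) / 2 = (a : ℝ) + (1 : ℝ) / 2 by ring, Real.rpow_add hq,
    Real.rpow_natCast]

private lemma pw2 {q : ℝ} (hq : 0 < q) (a : ℕ) :
    q ^ (-(2 * (a : ℝ) + 1) / 2) = (q ^ a * q ^ ((1 : ℝ) / 2))⁻¹ := by
  rw [show -(2 * (a : ℝ) + 1) / 2 = -((2 * (a : ℝ) + 1) / 2) by ring, Real.rpow_neg hq.le,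
    pw1 hq a]

private lemma pwhalfneg {q : ℝ} (hq : 0 < q) :
    q ^ (-(1 : ℝ) / 2) = (q ^ ((1 : ℝ) / 2))⁻¹ := by
  rw [show -(1 : ℝ) / 2 = -((1 : ℝ) / 2) by ring, Real.rpow_neg hq.le]

private lemma qnumZ_eq (q : ℝ) (z : ℤ) : qnumZ q z = (q ^ z - (q ^ z)⁻¹) / (q - q⁻¹) := by
  rw [qnumZ, zpow_neg]

private lemma dn_eq {q : ℝ} (hq : 0 < q) (ε₂ : ℝ) (a : ℕ) :
    dn q ε₂ a = ε₂ * ((q ^ a * q ^ ((1 : ℝ) / 2) + (q ^ a * q ^ ((1 : ℝ) / 2))⁻¹) / (q - q⁻¹)) := by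
  rw [dn, qnumPlus, Real.rpow_neg hq.le, pw1 hq a]

private lemma an_cor {q : ℝ} (hq : 0 < q) (ε₃ : ℝ) (k : ℕ) :
    an q ε₃ k 0 0 = ε₃ * qnumZ q (k : ℤ) / (q ^ ((1 : ℝ) / 2) - (q ^ ((1 : ℝ) / 2))⁻¹) := by
  rw [an, if_pos ⟨rfl, rfl⟩, pwhalfneg hq]

private lemma an_sub {q : ℝ} (hq : 0 < q) (ε₃ : ℝ) (k a : ℕ) :
    an q ε₃ k (a + 1) a =
      Real.sqrt (qnumZ q ((k : ℤ) + (a : ℤ) + 1) * qnumZ q ((k : ℤ) - (a : ℤ) - 1)) /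
        (q ^ a * q ^ ((1 : ℝ) / 2) - (q ^ a * q ^ ((1 : ℝ) / 2))⁻¹) := by
  rw [an, if_neg (by omega), if_pos rfl, pw1 hq a, pw2 hq a]

private lemma an_sup {q : ℝ} (hq : 0 < q) (ε₃ : ℝ) (k a : ℕ) :
    an q ε₃ k a (a + 1) =
      -(Real.sqrt (qnumZ q ((k : ℤ) + (a : ℤ) + 1) * qnumZ q ((k : ℤ) - (a : ℤ) - 1)) /
        (q ^ (a + 1) * q ^ ((1 : ℝ) / 2) - (q ^ (a + 1) * q ^ ((1 : ℝ) / 2))⁻¹)) := by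
  rw [an, if_neg (by omega), if_neg (by omega), if_pos rfl, pw1 hq (a + 1), pw2 hq (a + 1),
    show (k : ℤ) + ((a : ℕ) + 1 : ℕ) = (k : ℤ) + (a : ℤ) + 1 by push_cast; ring,
    show (k : ℤ) - ((a : ℕ) + 1 : ℕ) = (k : ℤ) - (a : ℤ) - 1 by push_cast; ring]

/-! ### The two relations, entrywise over ℝ -/

private lemma REL1 (q : ℝ) (hq : 0 < q) (hq1 : q ≠ 1) (k : ℕ) (ε₂ ε₃ : ℝ)
    (hε₂ : ε₂ = 1 ∨ ε₂ = -1) (i j : ℕ) :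
    an q ε₃ k i j * (dn q ε₂ j * dn q ε₂ j) - (q + q⁻¹) * (dn q ε₂ i * an q ε₃ k i j * dn q ε₂ j)
      + dn q ε₂ i * dn q ε₂ i * an q ε₃ k i j = -an q ε₃ k i j := by
  have hq0 : q ≠ 0 := hq.ne'
  have hr : (0:ℝ) < q ^ ((1 : ℝ) / 2) := Real.rpow_pos_of_pos hq _
  have hr0 : q ^ ((1 : ℝ) / 2) ≠ 0 := hr.ne'
  have hqr : q ^ ((1 : ℝ) / 2) * q ^ ((1 : ℝ) / 2) = q := by
    rw [← Real.rpow_add hq]; norm_num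
  have hs : q * q - 1 ≠ 0 := mulself_sub_one_ne hq hq1
  rcases an_cases q ε₃ k i j with h | h
  · rw [h]; ring
  · rcases h with ⟨hi, hj⟩ | h | h
    · subst hi hj
      rcases hε₂ with rfl | rfl <;>
      · simp only [dn_eq hq, pow_zero, one_mul]
        linear_combination an q ε₃ k 0 0 *
          SL1c q (q ^ ((1 : ℝ) / 2)) hqr hr0 hs
    · subst h
      rcases hε₂ with rfl | rfl <;>
      · simp only [dn_eq hq, pow_succ]
        linear_combination an q ε₃ k (j + 1) j *
          SL1 q (q ^ j * q ^ ((1 : ℝ) / 2)) hq0 (by positivity) hs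
    · subst h
      rcases hε₂ with rfl | rfl <;>
      · simp only [dn_eq hq, pow_succ]
        linear_combination an q ε₃ k i (i + 1) *
          SL1 q (q ^ i * q ^ ((1 : ℝ) / 2)) hq0 (by positivity) hs

set_option maxHeartbeats 4000000 in
private lemma REL2 (q : ℝ) (hq : 0 < q) (hq1 : q ≠ 1) (k : ℕ) (hk : 1 ≤ k) (ε₂ ε₃ : ℝ)
    (hε₂ : ε₂ = 1 ∨ ε₂ = -1) (hε₃ : ε₃ = 1 ∨ ε₃ = -1) (i j : Fin k) :
    ∑ m : Fin k, an q ε₃ k (i : ℕ) (m : ℕ) * an q ε₃ k (m : ℕ) (j : ℕ) *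
        (dn q ε₂ (i : ℕ) + dn q ε₂ (j : ℕ) - (q + q⁻¹) * dn q ε₂ (m : ℕ))
      = -(if i = j then dn q ε₂ (i : ℕ) else 0) := by
  have hq0 : q ≠ 0 := hq.ne'
  have hr : (0:ℝ) < q ^ ((1 : ℝ) / 2) := Real.rpow_pos_of_pos hq _
  have hr0 : q ^ ((1 : ℝ) / 2) ≠ 0 := hr.ne'
  have hqr : q ^ ((1 : ℝ) / 2) * q ^ ((1 : ℝ) / 2) = q := by
    rw [← Real.rpow_add hq]; norm_num
  have hs : q * q - 1 ≠ 0 := mulself_sub_one_ne hq hq1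
  have hT : ∀ a : ℕ, (0:ℝ) < q ^ a * q ^ ((1 : ℝ) / 2) := fun a => by positivity
  have hT1 : ∀ a : ℕ, q ^ a * q ^ ((1 : ℝ) / 2) ≠ 1 := fun a => by
    rw [← pw1 hq a]
    exact rpow_ne_one' hq hq1 (by positivity)
  have hD : ∀ a : ℕ, q ^ a * q ^ ((1 : ℝ) / 2) * (q ^ a * q ^ ((1 : ℝ) / 2)) - 1 ≠ 0 :=
    fun a => mulself_sub_one_ne (hT a) (hT1 a)
  have hXnn : ∀ a : ℕ, a + 1 ≤ k →
      0 ≤ qnumZ q ((k : ℤ) + (a : ℤ) + 1) * qnumZ q ((k : ℤ) - (a : ℤ) - 1) := fun a ha =>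
    mul_nonneg (qnumZ_nonneg hq hq1 (by omega)) (qnumZ_nonneg hq hq1 (by omega))
  by_cases hij : i = j
  · subst hij
    rw [if_pos rfl]
    rcases Nat.eq_zero_or_pos (i : ℕ) with h0 | hpos
    · -- corner diagonal
      rcases Nat.lt_or_ge 1 k with hk2 | hk1
      · -- k ≥ 2 : support {0, 1}
        rw [sum_eq_pair _ ⟨0, by omega⟩ ⟨1, by omega⟩ (by simp [Fin.ext_iff])
          (fun c h1 h2 => by
            have hv1 : (c : ℕ) ≠ 0 := fun hh => h1 (Fin.ext hh)
            have hv2 : (c : ℕ) ≠ 1 := fun hh => h2 (Fin.ext hh)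
            rcases an_cases q ε₃ k (i : ℕ) (c : ℕ) with h | h
            · rw [h, zero_mul, zero_mul]
            · have hz : an q ε₃ k (c : ℕ) (i : ℕ) = 0 :=
                an_eq_zero q ε₃ k (by omega) (by omega) (by omega)
              rw [hz, mul_zero, zero_mul])]
        dsimp only
        rw [h0, show (1:ℕ) = 0 + 1 from rfl]
        simp only [an_cor hq, an_sub hq, an_sup hq]
        rw [neg_sqrt_mul (hXnn 0 (by omega)) _ _]
        simp only [qnumZ_eq]
        rw [show q ^ ((k:ℤ) + ((0:ℕ):ℤ) + 1) = q ^ k * q by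
              rw [show (k:ℤ) + ((0:ℕ):ℤ) + 1 = ((k+1:ℕ):ℤ) by omega, zpow_natCast, pow_succ],
            show q ^ ((k:ℤ) - ((0:ℕ):ℤ) - 1) = q ^ k / q by
              rw [show (k:ℤ) - ((0:ℕ):ℤ) - 1 = ((k-1:ℕ):ℤ) by omega, zpow_natCast,
                eq_div_iff hq0, ← pow_succ]
              congr 1
              omega,
            show q ^ ((k:ℤ)) = q ^ k from zpow_natCast q k]
        simp only [dn_eq hq, pow_zero, pow_succ, pow_one, one_mul]
        rcases hε₃ with rfl | rfl <;>
          linear_combination ε₂ * SLcorner q (q ^ ((1 : ℝ) / 2)) (q ^ k) hqr hr0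
            (pow_ne_zero k hq0) hs (by simpa using hD 0) (by simpa [pow_succ] using hD 1)
      · -- k = 1
        have hk1' : k = 1 := by omega
        subst hk1'
        rw [Finset.sum_eq_single_of_mem ⟨0, by omega⟩ (Finset.mem_univ _)
          (fun b _ hb => by
            have : (b : ℕ) = 0 := by omega
            exact absurd (Fin.ext this) hb)]
        dsimp only
        rw [h0]
        simp only [an_cor hq, qnumZ_eq]
        rw [show q ^ (((1:ℕ)):ℤ) = q by rw [zpow_natCast, pow_one]]
        simp only [dn_eq hq, pow_zero, one_mul]
        rcases hε₃ with rfl | rfl <;>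
          linear_combination ε₂ * SLcorner1 q (q ^ ((1 : ℝ) / 2)) hqr hr0 hs
            (by simpa using hD 0)
    · -- interior diagonal
      obtain ⟨n, hn⟩ : ∃ n, (i : ℕ) = n + 1 := ⟨(i : ℕ) - 1, by omega⟩
      have hilt : (i : ℕ) < k := i.isLt
      rcases Nat.lt_or_ge (n + 2) k with hlt | hge
      · rw [sum_eq_pair _ ⟨n, by omega⟩ ⟨n + 2, hlt⟩ (by simp [Fin.ext_iff])
          (fun c h1 h2 => by
            have hv1 : (c : ℕ) ≠ n := fun hh => h1 (Fin.ext hh)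
            have hv2 : (c : ℕ) ≠ n + 2 := fun hh => h2 (Fin.ext hh)
            rcases an_cases q ε₃ k (i : ℕ) (c : ℕ) with h | h
            · rw [h, zero_mul, zero_mul]
            · have hz : an q ε₃ k (c : ℕ) (i : ℕ) = 0 :=
                an_eq_zero q ε₃ k (by omega) (by omega) (by omega)
              rw [hz, mul_zero, zero_mul])]
        dsimp only
        rw [hn, show n + 2 = n + 1 + 1 from rfl]
        simp only [an_sub hq, an_sup hq]
        rw [sqrt_mul_neg (hXnn n (by omega)) _ _, neg_sqrt_mul (hXnn (n + 1) (by omega)) _ _]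
        simp only [qnumZ_eq]
        rw [show q ^ ((k:ℤ) + ((n:ℕ):ℤ) + 1) = q ^ (k-n-1) * (q ^ n * q ^ n) * q * q by
              rw [show (k:ℤ) + ((n:ℕ):ℤ) + 1 = ((k-n-1+(n+n)+2 : ℕ):ℤ) by omega, zpow_natCast]
              ring,
            show q ^ ((k:ℤ) - ((n:ℕ):ℤ) - 1) = q ^ (k-n-1) by
              rw [show (k:ℤ) - ((n:ℕ):ℤ) - 1 = ((k-n-1:ℕ):ℤ) by omega, zpow_natCast],
            show q ^ ((k:ℤ) + ((n+1:ℕ):ℤ) + 1) = q ^ (k-n-1) * (q ^ n * q ^ n) * q * q * q by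
              rw [show (k:ℤ) + ((n+1:ℕ):ℤ) + 1 = ((k-n-1+(n+n)+3 : ℕ):ℤ) by omega, zpow_natCast]
              ring,
            show q ^ ((k:ℤ) - ((n+1:ℕ):ℤ) - 1) = q ^ (k-n-1) / q by
              rw [show (k:ℤ) - ((n+1:ℕ):ℤ) - 1 = ((k-n-2:ℕ):ℤ) by omega, zpow_natCast,
                eq_div_iff hq0, ← pow_succ]
              congr 1
              omega]
        simp only [dn_eq hq, pow_succ]
        linear_combination ε₂ * SLint q (q ^ ((1 : ℝ) / 2)) (q ^ n) (q ^ (k-n-1)) hqr hr0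
          (pow_ne_zero n hq0) (pow_ne_zero _ hq0) hs (hD n)
          (by simpa [pow_succ] using hD (n + 1)) (by simpa [pow_succ] using hD (n + 2))
      · -- boundary: k = n + 2
        have hk2 : k = n + 2 := by omega
        subst hk2
        rw [Finset.sum_eq_single_of_mem ⟨n, by omega⟩ (Finset.mem_univ _)
          (fun b _ hb => by
            have hvb : (b : ℕ) ≠ n := fun hh => hb (Fin.ext hh)
            have hblt : (b : ℕ) < n + 2 := b.isLt
            rcases an_cases q ε₃ (n + 2) (i : ℕ) (b : ℕ) with h | h
            · rw [h, zero_mul, zero_mul]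
            · have hz : an q ε₃ (n + 2) (b : ℕ) (i : ℕ) = 0 :=
                an_eq_zero q ε₃ (n + 2) (by omega) (by omega) (by omega)
              rw [hz, mul_zero, zero_mul])]
        dsimp only
        rw [hn]
        simp only [an_sub hq, an_sup hq]
        rw [sqrt_mul_neg (hXnn n (by omega)) _ _]
        simp only [qnumZ_eq]
        rw [show q ^ (((n+2:ℕ):ℤ) + ((n:ℕ):ℤ) + 1) = (q ^ n * q ^ n) * q * q * q by
              rw [show ((n+2:ℕ):ℤ) + ((n:ℕ):ℤ) + 1 = ((n+n+3 : ℕ):ℤ) by omega, zpow_natCast]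
              ring,
            show q ^ (((n+2:ℕ):ℤ) - ((n:ℕ):ℤ) - 1) = q by
              rw [show ((n+2:ℕ):ℤ) - ((n:ℕ):ℤ) - 1 = ((1:ℕ):ℤ) by omega, zpow_natCast,
                pow_one]]
        simp only [dn_eq hq, pow_succ]
        linear_combination ε₂ * SLbnd q (q ^ ((1 : ℝ) / 2)) (q ^ n) hqr hr0
          (pow_ne_zero n hq0) hs (hD n) (by simpa [pow_succ] using hD (n + 1))
  · -- off-diagonal
    rw [if_neg hij, neg_zero]
    have hijv : (i : ℕ) ≠ (j : ℕ) := fun h => hij (Fin.ext h)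
    by_cases hc1 : ((i : ℕ) = 0 ∧ (j : ℕ) = 1) ∨ ((i : ℕ) = 1 ∧ (j : ℕ) = 0)
    · -- neighbors at the corner: single support {0}, vanishing factor
      rw [Finset.sum_eq_single_of_mem ⟨0, by omega⟩ (Finset.mem_univ _)
        (fun b _ hb => by
          have hvb : (b : ℕ) ≠ 0 := fun hh => hb (Fin.ext hh)
          rcases an_cases q ε₃ k (i : ℕ) (b : ℕ) with h | h
          · rw [h, zero_mul, zero_mul]
          · have hz : an q ε₃ k (b : ℕ) (j : ℕ) = 0 :=
              an_eq_zero q ε₃ k (by omega) (by omega) (by omega)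
            rw [hz, mul_zero, zero_mul])]
      dsimp only
      have hfac : dn q ε₂ (i : ℕ) + dn q ε₂ (j : ℕ) - (q + q⁻¹) * dn q ε₂ 0 = 0 := by
        rcases hc1 with ⟨h1, h2⟩ | ⟨h1, h2⟩ <;>
        · rw [h1, h2]
          simp only [dn_eq hq, pow_zero, pow_one, one_mul]
          linear_combination ε₂ * SLcoff q (q ^ ((1 : ℝ) / 2)) hqr hr0 hs
      rw [hfac, mul_zero]
    · by_cases hc2 : (i : ℕ) = (j : ℕ) + 2
      · rw [Finset.sum_eq_single_of_mem ⟨(j : ℕ) + 1, by omega⟩ (Finset.mem_univ _)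
          (fun b _ hb => by
            have hvb : (b : ℕ) ≠ (j : ℕ) + 1 := fun hh => hb (Fin.ext hh)
            rcases an_cases q ε₃ k (i : ℕ) (b : ℕ) with h | h
            · rw [h, zero_mul, zero_mul]
            · have hz : an q ε₃ k (b : ℕ) (j : ℕ) = 0 :=
                an_eq_zero q ε₃ k (by omega) (by omega) (by omega)
              rw [hz, mul_zero, zero_mul])]
        dsimp only
        have hfac : dn q ε₂ (i : ℕ) + dn q ε₂ (j : ℕ) - (q + q⁻¹) * dn q ε₂ ((j : ℕ) + 1) = 0 := by
          rw [hc2]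
          simp only [dn_eq hq, pow_succ]
          linear_combination ε₂ * SLmid q (q ^ (j : ℕ) * q ^ ((1 : ℝ) / 2)) hq0
            (by positivity) hs
        rw [hfac, mul_zero]
      · by_cases hc3 : (j : ℕ) = (i : ℕ) + 2
        · rw [Finset.sum_eq_single_of_mem ⟨(i : ℕ) + 1, by omega⟩ (Finset.mem_univ _)
            (fun b _ hb => by
              have hvb : (b : ℕ) ≠ (i : ℕ) + 1 := fun hh => hb (Fin.ext hh)
              rcases an_cases q ε₃ k (i : ℕ) (b : ℕ) with h | h
              · rw [h, zero_mul, zero_mul]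
              · have hz : an q ε₃ k (b : ℕ) (j : ℕ) = 0 :=
                  an_eq_zero q ε₃ k (by omega) (by omega) (by omega)
                rw [hz, mul_zero, zero_mul])]
          dsimp only
          have hfac : dn q ε₂ (i : ℕ) + dn q ε₂ (j : ℕ) - (q + q⁻¹) * dn q ε₂ ((i : ℕ) + 1) = 0 := by
            rw [hc3]
            simp only [dn_eq hq, pow_succ]
            linear_combination ε₂ * SLmid q (q ^ (i : ℕ) * q ^ ((1 : ℝ) / 2)) hq0
              (by positivity) hs
          rw [hfac, mul_zero]
        · apply Finset.sum_eq_zero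
          intro m _
          rcases an_cases q ε₃ k (i : ℕ) (m : ℕ) with h | h
          · rw [h, zero_mul, zero_mul]
          · have hz : an q ε₃ k (m : ℕ) (j : ℕ) = 0 :=
              an_eq_zero q ε₃ k (by omega) (by omega) (by omega)
            rw [hz, mul_zero, zero_mul]

/-! ### The theorem -/

set_option maxHeartbeats 1000000 in
/-- the nonclassical-type representation `T_{ε,l}` of `U'_q(so_3)` with
`l = k - 1/2` (`k ≥ 1`): the matrices `A = T(I_{32})`, `B = T(I_{21})`, indexed by
`m = 1/2, 3/2, ..., l` (index `i ∈ Fin k` corresponds to `m = i + 1/2`, so e.g.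
`[l+m+1] = [k+i+1]`, `[l-m] = [k-i-1]`, `[l+m] = [k+i]`, `[l-m+1] = [k-i]`,
`[l+1/2] = [k]`), satisfy both cubic defining relations. -/
theorem stmt_12 (q : ℝ) (hq : 0 < q) (hq1 : q ≠ 1) (k : ℕ) (hk : 1 ≤ k)
    (ε₂ ε₃ : ℝ) (hε₂ : ε₂ = 1 ∨ ε₂ = -1) (hε₃ : ε₃ = 1 ∨ ε₃ = -1)
    (A B : Matrix (Fin k) (Fin k) ℂ)
    (hB : B = Matrix.diagonal fun i : Fin k =>
      ((ε₂ * qnumPlus q ((2 * (i : ℝ) + 1) / 2) : ℝ) : ℂ))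
    (hA : A = Matrix.of fun i j : Fin k =>
      if (i : ℕ) = 0 ∧ (j : ℕ) = 0 then
        ((ε₃ * qnumZ q (k : ℤ) / (q ^ ((1 : ℝ) / 2) - q ^ (-(1 : ℝ) / 2)) : ℝ) : ℂ)
      else if (i : ℤ) = (j : ℤ) + 1 then
        ((Real.sqrt (qnumZ q ((k : ℤ) + (j : ℤ) + 1) * qnumZ q ((k : ℤ) - (j : ℤ) - 1))
          / (q ^ ((2 * (j : ℝ) + 1) / 2) - q ^ (-(2 * (j : ℝ) + 1) / 2)) : ℝ) : ℂ)
      else if (i : ℤ) = (j : ℤ) - 1 then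
        -((Real.sqrt (qnumZ q ((k : ℤ) + (j : ℤ)) * qnumZ q ((k : ℤ) - (j : ℤ)))
          / (q ^ ((2 * (j : ℝ) + 1) / 2) - q ^ (-(2 * (j : ℝ) + 1) / 2)) : ℝ) : ℂ)
      else 0) :
    A * B ^ 2 - ((q : ℂ) + (q : ℂ)⁻¹) • (B * A * B) + B ^ 2 * A = -A ∧
    A ^ 2 * B - ((q : ℂ) + (q : ℂ)⁻¹) • (A * B * A) + B * A ^ 2 = -B := by
  have hAe : A = Matrix.of fun i j : Fin k => ((an q ε₃ k (i : ℕ) (j : ℕ) : ℝ) : ℂ) := by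
    rw [hA]
    ext i j
    simp only [Matrix.of_apply, an]
    by_cases h1 : (i : ℕ) = 0 ∧ (j : ℕ) = 0
    · rw [if_pos h1, if_pos h1]
    · rw [if_neg h1, if_neg h1]
      by_cases h2 : (i : ℤ) = (j : ℤ) + 1
      · rw [if_pos h2, if_pos (show (i : ℕ) = (j : ℕ) + 1 by omega)]
      · rw [if_neg h2, if_neg (show ¬(i : ℕ) = (j : ℕ) + 1 by omega)]
        by_cases h3 : (i : ℤ) = (j : ℤ) - 1
        · rw [if_pos h3, if_pos (show (j : ℕ) = (i : ℕ) + 1 by omega)]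
          norm_cast
        · rw [if_neg h3, if_neg (show ¬(j : ℕ) = (i : ℕ) + 1 by omega)]
          norm_num
  have hBe : B = Matrix.diagonal fun i : Fin k => ((dn q ε₂ (i : ℕ) : ℝ) : ℂ) := by
    rw [hB]
    rfl
  have hB2 : B ^ 2 = Matrix.diagonal fun i : Fin k =>
      ((dn q ε₂ (i : ℕ) : ℝ) : ℂ) * ((dn q ε₂ (i : ℕ) : ℝ) : ℂ) := by
    rw [pow_two, hBe, Matrix.diagonal_mul_diagonal]
  constructor
  · ext i j
    have e1 : (A * B ^ 2) i j = ((an q ε₃ k (i : ℕ) (j : ℕ) : ℝ) : ℂ) *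
        (((dn q ε₂ (j : ℕ) : ℝ) : ℂ) * ((dn q ε₂ (j : ℕ) : ℝ) : ℂ)) := by
      rw [hB2, hAe, Matrix.mul_diagonal]
      simp only [Matrix.of_apply]
    have e2 : (B * A * B) i j = ((dn q ε₂ (i : ℕ) : ℝ) : ℂ) *
        ((an q ε₃ k (i : ℕ) (j : ℕ) : ℝ) : ℂ) * ((dn q ε₂ (j : ℕ) : ℝ) : ℂ) := by
      rw [hAe, hBe, Matrix.mul_diagonal, Matrix.diagonal_mul]
      simp only [Matrix.of_apply]
    have e3 : (B ^ 2 * A) i j = ((dn q ε₂ (i : ℕ) : ℝ) : ℂ) * ((dn q ε₂ (i : ℕ) : ℝ) : ℂ) *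
        ((an q ε₃ k (i : ℕ) (j : ℕ) : ℝ) : ℂ) := by
      rw [hB2, hAe, Matrix.diagonal_mul]
      simp only [Matrix.of_apply]
    have e4 : (-A) i j = -((an q ε₃ k (i : ℕ) (j : ℕ) : ℝ) : ℂ) := by
      rw [hAe, Matrix.neg_apply]
      simp only [Matrix.of_apply]
    simp only [Matrix.sub_apply, Matrix.add_apply, Matrix.smul_apply, smul_eq_mul]
    rw [e1, e2, e3, e4]
    have hR := REL1 q hq hq1 k ε₂ ε₃ hε₂ (i : ℕ) (j : ℕ)
    have hRC := Complex.ofReal_inj.mpr hR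
    push_cast at hRC
    linear_combination hRC
  · ext i j
    have e1 : (A ^ 2 * B) i j = (∑ m : Fin k, ((an q ε₃ k (i : ℕ) (m : ℕ) : ℝ) : ℂ) *
        ((an q ε₃ k (m : ℕ) (j : ℕ) : ℝ) : ℂ)) * ((dn q ε₂ (j : ℕ) : ℝ) : ℂ) := by
      rw [hBe, Matrix.mul_diagonal, pow_two, hAe, Matrix.mul_apply]
      simp only [Matrix.of_apply]
    have e2 : (A * B * A) i j = ∑ m : Fin k, ((an q ε₃ k (i : ℕ) (m : ℕ) : ℝ) : ℂ) *
        ((dn q ε₂ (m : ℕ) : ℝ) : ℂ) * ((an q ε₃ k (m : ℕ) (j : ℕ) : ℝ) : ℂ) := by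
      rw [hAe, hBe, Matrix.mul_apply]
      simp only [Matrix.mul_diagonal, Matrix.of_apply]
    have e3 : (B * A ^ 2) i j = ((dn q ε₂ (i : ℕ) : ℝ) : ℂ) *
        ∑ m : Fin k, ((an q ε₃ k (i : ℕ) (m : ℕ) : ℝ) : ℂ) *
          ((an q ε₃ k (m : ℕ) (j : ℕ) : ℝ) : ℂ) := by
      rw [pow_two, hAe, hBe, Matrix.diagonal_mul, Matrix.mul_apply]
      simp only [Matrix.of_apply]
    have e4 : (-B) i j = -(if i = j then ((dn q ε₂ (i : ℕ) : ℝ) : ℂ) else 0) := by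
      rw [hBe, Matrix.neg_apply, Matrix.diagonal_apply]
    simp only [Matrix.sub_apply, Matrix.add_apply, Matrix.smul_apply, smul_eq_mul]
    rw [e1, e2, e3, e4]
    have hR := REL2 q hq hq1 k hk ε₂ ε₃ hε₂ hε₃ i j
    have hR' : (∑ m : Fin k, an q ε₃ k (i : ℕ) (m : ℕ) * an q ε₃ k (m : ℕ) (j : ℕ))
          * dn q ε₂ (j : ℕ)
        - (q + q⁻¹) * (∑ m : Fin k, an q ε₃ k (i : ℕ) (m : ℕ) * dn q ε₂ (m : ℕ) *
            an q ε₃ k (m : ℕ) (j : ℕ))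
        + dn q ε₂ (i : ℕ) * (∑ m : Fin k, an q ε₃ k (i : ℕ) (m : ℕ) *
            an q ε₃ k (m : ℕ) (j : ℕ))
        = -(if i = j then dn q ε₂ (i : ℕ) else 0) := by
      rw [← hR, Finset.sum_mul, Finset.mul_sum, Finset.mul_sum, ← Finset.sum_sub_distrib,
        ← Finset.sum_add_distrib]
      exact Finset.sum_congr rfl fun m _ => by ring
    have hRC := Complex.ofReal_inj.mpr hR'
    push_cast [apply_ite Complex.ofReal] at hRC
    by_cases hij : i = j
    · simp only [hij, if_pos rfl] at hRC ⊢
      linear_combination hRC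
    · simp only [if_neg hij] at hRC ⊢
      linear_combination hRC
end
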